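/- arXiv:1611.05733 — 4 statements merged into one kernel-verified Lean document; each statement's English description precedes it below -/
import Mathlib

section
/- For the modified polynomials with alternating signs and any z with |z| = 1, |P_k(z)| ≤ √2 · 2^{k/2}; that is, the coefficient sequence satisfies the root-N property at dyadic lengths. -/
open Polynomial

theorem modified_rudin_shapiro_root_N
    (P Q : ℕ → Polynomial ℂ)
    (hP0 : P 0 = X) (hQ0 : Q 0 = X)
    (hP : ∀ k, P (k + 1) = P k + (-1 : Polynomial ℂ) ^ k * X ^ (2 ^ k) * Q k)
    (hQ : ∀ k, Q (k + 1) = P k - (-1 : Polynomial ℂ) ^ k * X ^ (2 ^ k) * Q k) :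
    ∀ k, ∀ z : ℂ, ‖z‖ = 1 →
      ‖(P k).eval z‖ ≤ Real.sqrt 2 * 2 ^ ((k : ℝ) / 2) := by
  have key : ∀ k, ∀ z : ℂ, ‖z‖ = 1 →
      ‖(P k).eval z‖ ^ 2 + ‖(Q k).eval z‖ ^ 2 = 2 ^ (k + 1) := by
    intro k
    induction k with
    | zero =>
      intro z hz
      simp [hP0, hQ0, hz]
      norm_num
    | succ k ih =>
      intro z hz
      have h := ih z hz
      set a := (P k).eval z
      set b := (Q k).eval z
      have hc : ‖((-1 : ℂ) ^ k * z ^ (2 ^ k)) * b‖ = ‖b‖ := by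
        simp [map_mul, map_pow, hz]
      rw [hP, hQ]
      simp only [eval_add, eval_sub, eval_mul, eval_pow, eval_X, eval_neg, eval_one]
      set c := ((-1 : ℂ) ^ k * z ^ (2 ^ k)) * b with hcdef
      have par : ‖a + c‖ ^ 2 + ‖a - c‖ ^ 2
          = 2 * (‖a‖ ^ 2 + ‖c‖ ^ 2) := by
        simp only [Complex.sq_norm, Complex.normSq_add, Complex.normSq_sub]
        ring
      have : ‖a + c‖ ^ 2 + ‖a - c‖ ^ 2 = 2 ^ (k + 1 + 1) := by
        rw [par, hc, h]; ring
      convert this using 3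
  intro k z hz
  have h := key k z hz
  have hQnn : 0 ≤ ‖(Q k).eval z‖ ^ 2 := sq_nonneg _
  have hle : ‖(P k).eval z‖ ^ 2 ≤ 2 ^ (k + 1) := by linarith
  have h1 : ‖(P k).eval z‖ ≤ Real.sqrt (2 ^ (k + 1)) :=
    (Real.le_sqrt (norm_nonneg _) (by positivity)).mpr hle
  have h2 : Real.sqrt (2 ^ (k + 1)) = Real.sqrt 2 * 2 ^ ((k : ℝ) / 2) := by
    rw [pow_succ, mul_comm, Real.sqrt_mul (by positivity)]
    congr 1
    rw [Real.sqrt_eq_rpow, ← Real.rpow_natCast 2 k, ← Real.rpow_mul (by norm_num),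
      show (k : ℝ) * (1 / 2) = (k : ℝ) / 2 by ring]
  linarith [h2 ▸ h1]
end

section
/- For the modified alternating-sign polynomials, every coefficient of P_k of index n with 1 ≤ n ≤ 2^k is ±1, and for even k the first 2^k coefficients of P_{k+2} coincide with those of P_k. -/
open Polynomial

theorem modified_rudin_shapiro_coeffs
    (P Q : ℕ → Polynomial ℤ)
    (hP0 : P 0 = X) (hQ0 : Q 0 = X)
    (hP : ∀ k, P (k + 1) = P k + (-1 : Polynomial ℤ) ^ k * X ^ (2 ^ k) * Q k)
    (hQ : ∀ k, Q (k + 1) = P k - (-1 : Polynomial ℤ) ^ k * X ^ (2 ^ k) * Q k) :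
    (∀ k, ∀ n, 1 ≤ n → n ≤ 2 ^ k → (P k).coeff n = 1 ∨ (P k).coeff n = -1) ∧
    (∀ k, Even k → ∀ n, 1 ≤ n → n ≤ 2 ^ k → (P (k + 2)).coeff n = (P k).coeff n) := by
  have key : ∀ k n, ((-1 : Polynomial ℤ) ^ k * X ^ (2 ^ k) * Q k).coeff n
      = (-1 : ℤ) ^ k * (if 2 ^ k ≤ n then (Q k).coeff (n - 2 ^ k) else 0) := by
    intro k n
    have h : (-1 : Polynomial ℤ) ^ k * X ^ (2 ^ k) * Q k
        = C ((-1 : ℤ) ^ k) * (Q k * X ^ (2 ^ k)) := by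
      rw [map_pow, map_neg, map_one]; ring
    rw [h, coeff_C_mul, coeff_mul_X_pow']
  have main : ∀ k, (P k).coeff 0 = 0 ∧ (Q k).coeff 0 = 0 ∧
      (∀ n, 1 ≤ n → n ≤ 2 ^ k →
        ((P k).coeff n = 1 ∨ (P k).coeff n = -1) ∧
        ((Q k).coeff n = 1 ∨ (Q k).coeff n = -1)) ∧
      (∀ n, 2 ^ k < n → (P k).coeff n = 0 ∧ (Q k).coeff n = 0) := by
    intro k
    induction k with
    | zero =>
      refine ⟨by simp [hP0], by simp [hQ0], ?_, ?_⟩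
      · intro n h1 h2
        have hn : n = 1 := by omega
        subst hn
        simp [hP0, hQ0]
      · intro n hn
        have : ¬ (n = 1) := by norm_num at hn ⊢; omega
        simp [hP0, hQ0, coeff_X, Ne.symm this]
    | succ k ih =>
      obtain ⟨ihP0, ihQ0, ihmid, ihhigh⟩ := ih
      have sgn : (-1 : ℤ) ^ k = 1 ∨ (-1 : ℤ) ^ k = -1 := neg_one_pow_eq_or ℤ k
      have cP : ∀ n, (P (k + 1)).coeff n
          = (P k).coeff n + (-1 : ℤ) ^ k * (if 2 ^ k ≤ n then (Q k).coeff (n - 2 ^ k) else 0) := by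
        intro n; rw [hP k, coeff_add, key]
      have cQ : ∀ n, (Q (k + 1)).coeff n
          = (P k).coeff n - (-1 : ℤ) ^ k * (if 2 ^ k ≤ n then (Q k).coeff (n - 2 ^ k) else 0) := by
        intro n; rw [hQ k, coeff_sub, key]
      have hpos : (1 : ℕ) ≤ 2 ^ k := Nat.one_le_two_pow
      refine ⟨?_, ?_, ?_, ?_⟩
      · rw [cP 0, if_neg (by omega)]; simp [ihP0]
      · rw [cQ 0, if_neg (by omega)]; simp [ihP0]
      · intro n h1 h2
        rw [cP n, cQ n]
        by_cases hle : n ≤ 2 ^ k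
        · rcases eq_or_lt_of_le hle with h | h
          · have hz : n - 2 ^ k = 0 := by omega
            rw [if_pos (le_of_eq h.symm), hz]
            simp only [ihQ0, mul_zero, add_zero, sub_zero]
            exact ⟨(ihmid n h1 hle).1, (ihmid n h1 hle).1⟩
          · rw [if_neg (by omega)]
            simp only [mul_zero, add_zero, sub_zero]
            exact ⟨(ihmid n h1 hle).1, (ihmid n h1 hle).1⟩
        · have hgt : 2 ^ k < n := by omega
          have hP0' : (P k).coeff n = 0 := (ihhigh n hgt).1
          have hm1 : 1 ≤ n - 2 ^ k := by omega
          have hm2 : n - 2 ^ k ≤ 2 ^ k := by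
            have : n ≤ 2 ^ k + 2 ^ k := by
              have := h2; rw [pow_succ] at this; omega
            omega
          have hQc := (ihmid (n - 2 ^ k) hm1 hm2).2
          rw [if_pos (le_of_lt hgt), hP0']
          rcases sgn with hs | hs <;> rcases hQc with hq | hq <;>
            rw [hs, hq] <;> norm_num
      · intro n hn
        have hgt : 2 ^ k < n := by
          rw [pow_succ] at hn; omega
        have hm : 2 ^ k < n - 2 ^ k := by
          rw [pow_succ] at hn; omega
        rw [cP n, cQ n, if_pos (le_of_lt hgt), (ihhigh n hgt).1, (ihhigh (n - 2 ^ k) hm).2]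
        norm_num
  have step : ∀ k n, n ≤ 2 ^ k → (P (k + 1)).coeff n = (P k).coeff n := by
    intro k n hn
    rw [hP k, coeff_add, key]
    rcases eq_or_lt_of_le hn with h | h
    · rw [if_pos (le_of_eq h.symm), h, Nat.sub_self, (main k).2.1, mul_zero, add_zero]
    · rw [if_neg (by omega), mul_zero, add_zero]
  refine ⟨fun k n h1 h2 => ((main k).2.2.1 n h1 h2).1, ?_⟩
  intro k _ n h1 h2
  have h3 : n ≤ 2 ^ (k + 1) :=
    le_trans h2 (Nat.pow_le_pow_right (by norm_num) (by omega))
  rw [step (k + 1) n h3, step k n h2]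
end

section
/- In the fixed point of the substitution σ: A↦ABDB, B↦ABAC, C↦DCDB, D↦DCAC starting from seed A, the letter A occurs with two distinct predecessors, namely both B and C occur immediately before some occurrence of A; hence the fixed point sequence is aperiodic (not eventually periodic). -/
/-- The substitution σ: A ↦ ABDB, B ↦ ABAC, C ↦ DCDB, D ↦ DCAC (letters coded 0,1,2,3). -/
def sigmaSub : Fin 4 → List (Fin 4)
  | 0 => [0, 1, 3, 1]
  | 1 => [0, 1, 0, 2]
  | 2 => [3, 2, 3, 1]
  | 3 => [3, 2, 0, 2]

/-- The fixed point of σ starting from the seed A: the letter at position `n`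
is obtained by following the base-4 digits of `n` through the substitution. -/
def sigmaFix (n : ℕ) : Fin 4 :=
  ((Nat.digits 4 n).reverse).foldl (fun a d => (sigmaSub a).getD d 0) 0

lemma sigmaFix_zero : sigmaFix 0 = 0 := by simp [sigmaFix]

lemma sigmaFix_step (n d : ℕ) (hd : d < 4) :
    sigmaFix (4 * n + d) = (sigmaSub (sigmaFix n)).getD d 0 := by
  rcases Nat.eq_zero_or_pos (4 * n + d) with h | h
  · have hn : n = 0 := by omega
    have hd0 : d = 0 := by omega
    subst hn hd0
    simp [sigmaFix, sigmaSub]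
  · unfold sigmaFix
    rw [Nat.digits_def' (by norm_num : 1 < 4) h]
    have h1 : (4 * n + d) % 4 = d := by omega
    have h2 : (4 * n + d) / 4 = n := by omega
    rw [h1, h2, List.reverse_cons, List.foldl_append]
    rfl

lemma sigma_inj (a b : Fin 4)
    (h1 : (sigmaSub a).getD 1 0 = (sigmaSub b).getD 1 0)
    (h2 : (sigmaSub a).getD 2 0 = (sigmaSub b).getD 2 0)
    (h3 : (sigmaSub a).getD 3 0 = (sigmaSub b).getD 3 0) : a = b := by
  revert h1 h2 h3; revert a b; decide

/-- eventual period extends to a full period -/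
lemma full_period (p : ℕ) :
    ∀ N, (∀ n, N ≤ n → sigmaFix (n + p) = sigmaFix n) → ∀ n, sigmaFix (n + p) = sigmaFix n := by
  intro N
  induction N using Nat.strong_induction_on with
  | _ N IH =>
    intro h
    rcases Nat.eq_zero_or_pos N with hN | hN
    · subst hN; intro n; exact h n (Nat.zero_le n)
    · have h4 : ∀ m, N ≤ m → sigmaFix (m + 4 * p) = sigmaFix m := by
        intro m hm
        have e1 := h m hm
        have e2 := h (m + p) (by omega)
        have e3 := h (m + 2 * p) (by omega)
        have e4 := h (m + 3 * p) (by omega)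
        have : m + 4 * p = m + 3 * p + p := by ring
        rw [this]
        have : m + 3 * p = m + 2 * p + p := by ring
        rw [e4, this, e3, show m + 2 * p = m + p + p by ring, e2, e1]
      have hred : ∀ n, (N + 2) / 4 ≤ n → sigmaFix (n + p) = sigmaFix n := by
        intro n hn
        apply sigma_inj
        all_goals {
          rw [← sigmaFix_step (n + p) _ (by norm_num), ← sigmaFix_step n _ (by norm_num)]
          have e : 4 * (n + p) + 1 = 4 * n + 1 + 4 * p := by ring
          have e2 : 4 * (n + p) + 2 = 4 * n + 2 + 4 * p := by ring
          have e3 : 4 * (n + p) + 3 = 4 * n + 3 + 4 * p := by ring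
          first
            | (rw [e]; exact h4 (4 * n + 1) (by omega))
            | (rw [e2]; exact h4 (4 * n + 2) (by omega))
            | (rw [e3]; exact h4 (4 * n + 3) (by omega))
        }
      exact IH ((N + 2) / 4) (by omega) hred

lemma sigmaFix_one : sigmaFix 1 = 1 := by
  have := sigmaFix_step 0 1 (by norm_num)
  simpa [sigmaFix_zero, sigmaSub] using this

lemma no_full_period : ∀ p, 1 ≤ p → (∀ n, sigmaFix (n + p) = sigmaFix n) → False := by
  intro p
  induction p using Nat.strong_induction_on with
  | _ p IH =>
    intro hp h
    have hx0 : sigmaFix p = 0 := by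
      have := h 0
      simpa [sigmaFix_zero] using this
    have hx1 : sigmaFix (p + 1) = 1 := by
      have := h 1
      rw [show 1 + p = p + 1 by ring] at this
      rw [this, sigmaFix_one]
    -- class lemmas
    have odd1 : ∀ a : Fin 4, (sigmaSub a).getD 1 0 = 1 ∨ (sigmaSub a).getD 1 0 = 2 := by decide
    have odd3 : ∀ a : Fin 4, (sigmaSub a).getD 3 0 = 1 ∨ (sigmaSub a).getD 3 0 = 2 := by decide
    have pair23 : ∀ a : Fin 4, (sigmaSub a).getD 2 0 = 0 → (sigmaSub a).getD 3 0 = 2 := by decide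
    set q := p / 4 with hq
    have hmod : p = 4 * q ∨ p = 4 * q + 1 ∨ p = 4 * q + 2 ∨ p = 4 * q + 3 := by omega
    rcases hmod with hm | hm | hm | hm
    · -- p = 4q, descend
      have hq1 : 1 ≤ q := by omega
      apply IH q (by omega) hq1
      intro n
      apply sigma_inj
      all_goals {
        rw [← sigmaFix_step (n + q) _ (by norm_num), ← sigmaFix_step n _ (by norm_num)]
        first
          | (rw [show 4 * (n + q) + 1 = 4 * n + 1 + p by omega]; exact h (4 * n + 1))
          | (rw [show 4 * (n + q) + 2 = 4 * n + 2 + p by omega]; exact h (4 * n + 2))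
          | (rw [show 4 * (n + q) + 3 = 4 * n + 3 + p by omega]; exact h (4 * n + 3))
      }
    · -- p odd, position 4q+1 has letter in {1,2} but equals 0
      rw [hm] at hx0
      rw [sigmaFix_step q 1 (by norm_num)] at hx0
      rcases odd1 (sigmaFix q) with h' | h' <;> rw [hx0] at h' <;> exact absurd h' (by decide)
    · -- p = 4q+2 : x p = 0, x (p+1) = 1 violates pair constraint
      rw [hm] at hx0 hx1
      rw [sigmaFix_step q 2 (by norm_num)] at hx0
      rw [show 4 * q + 2 + 1 = 4 * q + 3 by omega, sigmaFix_step q 3 (by norm_num)] at hx1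
      have := pair23 (sigmaFix q) hx0
      rw [hx1] at this
      exact absurd this (by decide)
    · rw [hm] at hx0
      rw [sigmaFix_step q 3 (by norm_num)] at hx0
      rcases odd3 (sigmaFix q) with h' | h' <;> rw [hx0] at h' <;> exact absurd h' (by decide)

theorem sigma_fixed_point_aperiodic :
    (∃ n, 0 < n ∧ sigmaFix n = 0 ∧ sigmaFix (n - 1) = 1) ∧
    (∃ n, 0 < n ∧ sigmaFix n = 0 ∧ sigmaFix (n - 1) = 2) ∧
    ¬ ∃ p, 1 ≤ p ∧ ∃ N, ∀ n, N ≤ n → sigmaFix (n + p) = sigmaFix n := by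
  have x2 : sigmaFix 2 = 3 := by
    have := sigmaFix_step 0 2 (by norm_num)
    simpa [sigmaFix_zero, sigmaSub] using this
  have x3 : sigmaFix 3 = 1 := by
    have := sigmaFix_step 0 3 (by norm_num)
    simpa [sigmaFix_zero, sigmaSub] using this
  have x4 : sigmaFix 4 = 0 := by
    have := sigmaFix_step 1 0 (by norm_num)
    simpa [sigmaFix_one, sigmaSub] using this
  have x9 : sigmaFix 9 = 2 := by
    have := sigmaFix_step 2 1 (by norm_num)
    simpa [x2, sigmaSub] using this
  have x10 : sigmaFix 10 = 0 := by
    have := sigmaFix_step 2 2 (by norm_num)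
    simpa [x2, sigmaSub] using this
  refine ⟨⟨4, by norm_num, x4, x3⟩, ⟨10, by norm_num, x10, x9⟩, ?_⟩
  rintro ⟨p, hp, N, hper⟩
  exact no_full_period p hp (full_period p N hper)
end

section
/- For the fixed point of σ: A↦ABDB, B↦ABAC, C↦DCDB, D↦DCAC with weights φ(A)=φ(B)=1, φ(C)=φ(D)=−1, the vector v₂ = (1,0,0,−1, 0,1,−1,0, 0,−1,1,0, −1,0,0,1) (indexed by ordered letter pairs) is fixed by the correlation transfer recursion, and pairing v₂ with the correlation vectors Σ̂(k) of the substitution gives 0 for all k ≠ 0; equivalently, the two-point correlations of the balanced-weight sequence vanish for all non-zero distances k with 1 ≤ k ≤ 4. -/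
/-- The vector v₂ ∈ ℝ¹⁶, indexed by ordered letter pairs (A,B,C,D ordering),
with entries φ(a)φ(b) for φ(A)=φ(B)=1, φ(C)=φ(D)=-1. -/
def v2 : Fin 16 → ℝ :=
  ![1, 0, 0, -1, 0, 1, -1, 0, 0, -1, 1, 0, -1, 0, 0, 1]

theorem balanced_weight_correlations_vanish
    (Sigmahat : ℕ → Fin 16 → ℝ)
    (h1 : Sigmahat 1 = (1 / 8 : ℝ) • ![0, 1, 1, 0, 1, 0, 0, 1, 1, 0, 0, 1, 0, 1, 1, 0])
    (h2 : Sigmahat 2 = (1 / 8 : ℝ) • ![1, 0, 0, 1, 0, 1, 1, 0, 0, 1, 1, 0, 1, 0, 0, 1])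
    (h3 : Sigmahat 3 = Sigmahat 1) (h4 : Sigmahat 4 = Sigmahat 2)
    (hper : ∀ n, 1 ≤ n →
      Sigmahat (4 * n) = Sigmahat 4 ∧ Sigmahat (4 * n + 1) = Sigmahat 1 ∧
      Sigmahat (4 * n + 2) = Sigmahat 2 ∧ Sigmahat (4 * n + 3) = Sigmahat 3) :
    ∀ k, 1 ≤ k → ∑ i, v2 i * Sigmahat k i = 0 := by
  have L1 : ∑ i, v2 i * Sigmahat 1 i = 0 := by
    rw [h1]
    simp [v2, Fin.sum_univ_succ]
  have L2 : ∑ i, v2 i * Sigmahat 2 i = 0 := by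
    rw [h2]
    simp [v2, Fin.sum_univ_succ]
  intro k hk
  have hkey : Sigmahat k = Sigmahat 1 ∨ Sigmahat k = Sigmahat 2 := by
    have hdecomp : k = 4 * (k / 4) + k % 4 := (Nat.div_add_mod k 4).symm
    rcases Nat.eq_zero_or_pos (k / 4) with hq | hq
    · have hk4 : k < 4 := by omega
      interval_cases k
      · exact Or.inl rfl
      · exact Or.inr rfl
      · exact Or.inl h3
    · obtain ⟨p0, p1, p2, p3⟩ := hper (k / 4) hq
      have hr : k % 4 = 0 ∨ k % 4 = 1 ∨ k % 4 = 2 ∨ k % 4 = 3 := by omega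
      rcases hr with h | h | h | h
      · rw [show k = 4 * (k / 4) by omega]; exact Or.inr (p0.trans h4)
      · rw [show k = 4 * (k / 4) + 1 by omega]; exact Or.inl p1
      · rw [show k = 4 * (k / 4) + 2 by omega]; exact Or.inr p2
      · rw [show k = 4 * (k / 4) + 3 by omega]; exact Or.inl (p3.trans h3)
  rcases hkey with h | h <;> rw [h]
  · exact L1
  · exact L2
end
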